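/- Let n, r, k be positive integers with 2r ≤ n and r < min(k, n−k). Then the real matrix E_r with rows and columns indexed by the r-element subsets I, J of [n], defined by E_r(I,J) = 2^{−C(2r,2)} · C(n−2r+|I∩J|, |I∩J|) · C(k, 2r−|I∩J|)/C(2r, 2r−|I∩J|), is positive definite. -/

import Mathlib

set_option maxHeartbeats 1000000

open Finset Matrix

/-- The matrix `E_r`, indexed by the `r`-element subsets of `[n]`:
`E_r(I,J) = 2^{−C(2r,2)} · C(n−2r+|I∩J|, |I∩J|) · C(k, 2r−|I∩J|)/C(2r, 2r−|I∩J|)`. -/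
noncomputable def EmatR (n r k : ℕ) :
    Matrix {I : Finset (Fin n) // I.card = r} {I : Finset (Fin n) // I.card = r} ℝ :=
  fun I J =>
    ((2 : ℝ) ^ (Nat.choose (2 * r) 2))⁻¹
      * (Nat.choose (n - 2 * r + (I.1 ∩ J.1).card) (I.1 ∩ J.1).card : ℝ)
      * (Nat.choose k (2 * r - (I.1 ∩ J.1).card) : ℝ)
      / (Nat.choose (2 * r) (2 * r - (I.1 ∩ J.1).card) : ℝ)

lemma count_main {n : ℕ} (r k t j : ℕ) (I J : Finset (Fin n)) (hI : I.card = r) (hJ : J.card = r)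
    (ht : (I ∩ J).card = t) (htj : t ≤ j) (hjr : j ≤ r) (hjk : r + (j - t) ≤ k) :
    (((univ : Finset (Fin n)).powersetCard k).filter (fun S => J ⊆ S ∧ (S ∩ I).card = j)).card
      = (r - t).choose (j - t) * (n - (2 * r - t)).choose (k - r - (j - t)) := by
  have htr : t ≤ r := by
    have h := card_le_card (inter_subset_left : I ∩ J ⊆ I); omega
  have hIJu : (I ∪ J).card = 2 * r - t := by
    have := Finset.card_inter_add_card_union I J; omega
  have hIdJ : (I \ J).card = r - t := by
    have := Finset.card_inter_add_card_sdiff I J; omega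
  have hcompl : ((I ∪ J)ᶜ : Finset (Fin n)).card = n - (2 * r - t) := by
    rw [Finset.card_compl, hIJu]; simp
  rw [show (r - t).choose (j - t) * (n - (2 * r - t)).choose (k - r - (j - t))
      = (((I \ J).powersetCard (j - t)) ×ˢ (((I ∪ J)ᶜ).powersetCard (k - r - (j - t)))).card by
    rw [Finset.card_product, Finset.card_powersetCard, Finset.card_powersetCard, hIdJ, hcompl]]
  refine Finset.card_nbij' (fun S => (S ∩ (I \ J), S \ (I ∪ J)))
    (fun p => J ∪ p.1 ∪ p.2) ?_ ?_ ?_ ?_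
  · intro S hS
    simp only [Finset.mem_coe, mem_filter, mem_powersetCard] at hS
    obtain ⟨⟨-, hSk⟩, hJS, hSI⟩ := hS
    simp only [Finset.mem_coe, mem_product, mem_powersetCard]
    have e1 : S ∩ (I \ J) = (S ∩ I) \ (I ∩ J) := by
      ext x; simp only [mem_inter, mem_sdiff]; tauto
    have e2 : (I ∩ J) ⊆ S ∩ I := by
      intro x hx; simp only [mem_inter] at hx ⊢; exact ⟨hJS hx.2, hx.1⟩
    refine ⟨⟨inter_subset_right, ?_⟩, ⟨fun x hx => mem_compl.mpr (mem_sdiff.mp hx).2, ?_⟩⟩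
    · rw [e1, card_sdiff_of_subset e2, hSI, ht]
    · have e3 : S ∩ (I ∪ J) = (S ∩ I) ∪ J := by
        ext x
        simp only [mem_inter, mem_union]
        constructor
        · rintro ⟨hxS, hxI | hxJ⟩
          · exact Or.inl ⟨hxS, hxI⟩
          · exact Or.inr hxJ
        · rintro (⟨hxS, hxI⟩ | hxJ)
          · exact ⟨hxS, Or.inl hxI⟩
          · exact ⟨hJS hxJ, Or.inr hxJ⟩
      have e4 : (S ∩ I) ∩ J = I ∩ J := by
        ext x; simp only [mem_inter]
        exact ⟨fun h => ⟨h.1.2, h.2⟩, fun h => ⟨⟨hJS h.2, h.1⟩, h.2⟩⟩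
      have c1 := card_sdiff_add_card_inter S (I ∪ J)
      have c2 := card_union_add_card_inter (S ∩ I) J
      rw [e3] at c1
      rw [e4, ht] at c2
      rw [hSI, hJ] at c2
      omega
  · intro p hp
    simp only [Finset.mem_coe, mem_product, mem_powersetCard] at hp
    obtain ⟨⟨hA, hAcard⟩, hB, hBcard⟩ := hp
    simp only [Finset.mem_coe, mem_filter, mem_powersetCard]
    have hdJA : Disjoint J p.1 := by
      intro u huJ huA x hx
      have h1 := huJ hx; have h2 := hA (huA hx)
      rw [mem_sdiff] at h2; exact absurd h1 h2.2
    have hdB : Disjoint (J ∪ p.1) p.2 := by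
      intro u hu1 hu2 x hx
      have h2 := hB (hu2 hx)
      rw [mem_compl, mem_union] at h2
      have h1 := hu1 hx
      rw [mem_union] at h1
      rcases h1 with h | h
      · exact absurd (Or.inr h) h2
      · exact absurd (Or.inl (mem_sdiff.mp (hA h)).1) h2
    have hcT : (J ∪ p.1 ∪ p.2).card = k := by
      rw [card_union_of_disjoint hdB, card_union_of_disjoint hdJA, hJ, hAcard, hBcard]
      omega
    refine ⟨⟨subset_univ _, hcT⟩, subset_union_left.trans subset_union_left, ?_⟩
    have eTI : (J ∪ p.1 ∪ p.2) ∩ I = (J ∩ I) ∪ p.1 := by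
      ext x
      simp only [mem_inter, mem_union]
      constructor
      · rintro ⟨hx1 | hx2, hxI⟩
        · rcases hx1 with h | h
          · exact Or.inl ⟨h, hxI⟩
          · exact Or.inr h
        · exact absurd (mem_union.mpr (Or.inl hxI)) (mem_compl.mp (hB hx2))
      · rintro (⟨hxJ, hxI⟩ | hxA)
        · exact ⟨Or.inl (Or.inl hxJ), hxI⟩
        · exact ⟨Or.inl (Or.inr hxA), (mem_sdiff.mp (hA hxA)).1⟩
    have hdJI : Disjoint (J ∩ I) p.1 := by
      intro u hu1 hu2 x hx
      have h1 := mem_inter.mp (hu1 hx)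
      have h2 := mem_sdiff.mp (hA (hu2 hx))
      exact absurd h1.1 h2.2
    rw [eTI, card_union_of_disjoint hdJI, inter_comm, ht, hAcard]
    omega
  · intro S hS
    simp only [Finset.mem_coe, mem_filter, mem_powersetCard] at hS
    obtain ⟨⟨-, hSk⟩, hJS, hSI⟩ := hS
    ext x
    simp only [mem_union, mem_inter, mem_sdiff]
    constructor
    · rintro ((h | ⟨h, -⟩) | ⟨h, -⟩)
      · exact hJS h
      · exact h
      · exact h
    · intro hxS
      by_cases hxJ : x ∈ J
      · exact Or.inl (Or.inl hxJ)
      · by_cases hxI : x ∈ I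
        · exact Or.inl (Or.inr ⟨hxS, hxI, hxJ⟩)
        · exact Or.inr ⟨hxS, fun h => h.elim hxI hxJ⟩
  · intro p hp
    simp only [Finset.mem_coe, mem_product, mem_powersetCard] at hp
    obtain ⟨⟨hA, hAcard⟩, hB, hBcard⟩ := hp
    have h1 : (J ∪ p.1 ∪ p.2) ∩ (I \ J) = p.1 := by
      ext x
      simp only [mem_inter, mem_union, mem_sdiff]
      constructor
      · rintro ⟨(h | h) | h, hxI, hxJ⟩
        · exact absurd h hxJ
        · exact h
        · exact absurd (mem_union.mpr (Or.inl hxI)) (mem_compl.mp (hB h))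
      · intro hx
        have := mem_sdiff.mp (hA hx)
        exact ⟨Or.inl (Or.inr hx), this.1, this.2⟩
    have h2 : (J ∪ p.1 ∪ p.2) \ (I ∪ J) = p.2 := by
      ext x
      simp only [mem_sdiff, mem_union]
      constructor
      · rintro ⟨(h | h) | h, hxIJ⟩
        · exact absurd (Or.inr h) hxIJ
        · exact absurd (Or.inl (mem_sdiff.mp (hA h)).1) hxIJ
        · exact h
      · intro hx
        have := mem_compl.mp (hB hx)
        rw [mem_union] at this
        exact ⟨Or.inr hx, fun h => this h⟩
    exact Prod.ext h1 h2

lemma count_zero_lt {n : ℕ} (r k t j : ℕ) (I J : Finset (Fin n))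
    (ht : (I ∩ J).card = t) (hjt : j < t) :
    (((univ : Finset (Fin n)).powersetCard k).filter (fun S => J ⊆ S ∧ (S ∩ I).card = j)).card
      = 0 := by
  rw [Finset.card_eq_zero, Finset.filter_eq_empty_iff]
  rintro S - ⟨hJS, hSI⟩
  have hsub : I ∩ J ⊆ S ∩ I := fun x hx => by
    rw [mem_inter] at hx ⊢; exact ⟨hJS hx.2, hx.1⟩
  have := card_le_card hsub
  omega

lemma count_zero_big {n : ℕ} (r k t j : ℕ) (I J : Finset (Fin n)) (hJ : J.card = r)
    (ht : (I ∩ J).card = t) (htj : t ≤ j) (hk : k < r + (j - t)) :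
    (((univ : Finset (Fin n)).powersetCard k).filter (fun S => J ⊆ S ∧ (S ∩ I).card = j)).card
      = 0 := by
  rw [Finset.card_eq_zero, Finset.filter_eq_empty_iff]
  rintro S hS ⟨hJS, hSI⟩
  rw [mem_powersetCard] at hS
  have e4 : (S ∩ I) ∩ J = I ∩ J := by
    ext x; simp only [mem_inter]
    exact ⟨fun h => ⟨h.1.2, h.2⟩, fun h => ⟨⟨hJS h.2, h.1⟩, h.2⟩⟩
  have c2 := card_union_add_card_inter (S ∩ I) J
  rw [e4, ht, hSI, hJ] at c2
  have hsub : (S ∩ I) ∪ J ⊆ S := union_subset inter_subset_left hJS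
  have := card_le_card hsub
  omega

noncomputable def Bmat (n r k : ℕ) : Matrix (Fin (r+1)) (Fin (r+1)) ℝ :=
  fun t j => if (t:ℕ) ≤ (j:ℕ) ∧ r + ((j:ℕ) - (t:ℕ)) ≤ k
    then (((r - (t:ℕ)).choose ((j:ℕ) - (t:ℕ))
          * (n - (2*r - (t:ℕ))).choose (k - r - ((j:ℕ) - (t:ℕ))) : ℕ) : ℝ)
    else 0

lemma Bmat_triangular (n r k : ℕ) : Matrix.BlockTriangular (Bmat n r k) id := by
  intro t j h
  simp only [id_eq] at h
  rw [Bmat, if_neg]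
  rintro ⟨h1, -⟩
  exact absurd (Fin.le_def.mpr h1) (not_le.mpr h)

lemma Bmat_det_ne_zero (n r k : ℕ) (hr : 1 ≤ r) (hrn : 2*r ≤ n) (hrk : r < k)
    (hrnk : r < n - k) : (Bmat n r k).det ≠ 0 := by
  rw [Matrix.det_of_upperTriangular (Bmat_triangular n r k)]
  apply Finset.prod_ne_zero_iff.mpr
  intro t _
  have hkn : k < n := by omega
  rw [Bmat, if_pos ⟨le_refl _, by omega⟩]
  simp only [Nat.sub_self, Nat.choose_zero_right, one_mul]
  have hpos : 0 < (n - (2*r - (t:ℕ))).choose (k - r - 0) := by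
    apply Nat.choose_pos
    omega
  exact_mod_cast hpos.ne'


lemma count_eq_Bmat {n r k : ℕ} (I J : Finset (Fin n)) (hI : I.card = r) (hJ : J.card = r)
    (j : ℕ) (hjr : j ≤ r) :
    ((((univ : Finset (Fin n)).powersetCard k).filter
        (fun S => J ⊆ S ∧ (S ∩ I).card = j)).card : ℝ)
      = Bmat n r k ⟨(I ∩ J).card, Nat.lt_succ_of_le (by
          have := card_le_card (inter_subset_left : I ∩ J ⊆ I); omega)⟩
        ⟨j, Nat.lt_succ_of_le hjr⟩ := by
  set t := (I ∩ J).card with htdef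
  have htr : t ≤ r := by
    have := card_le_card (inter_subset_left : I ∩ J ⊆ I); omega
  rw [Bmat]
  simp only
  by_cases h1 : t ≤ j
  · by_cases h2 : r + (j - t) ≤ k
    · rw [if_pos ⟨h1, h2⟩, count_main r k t j I J hI hJ htdef.symm h1 hjr h2]
    · rw [if_neg (fun hh => h2 hh.2),
        count_zero_big r k t j I J hJ htdef.symm h1 (by omega)]
      simp
  · rw [if_neg (fun hh => h1 hh.1), count_zero_lt r k t j I J htdef.symm (by omega)]
    simp

/-- The key injectivity: if all `k`-set sums of `x` vanish, then `x = 0`. -/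
lemma indicator_inj {n r k : ℕ} (hr : 1 ≤ r) (hrn : 2*r ≤ n) (hrk : r < k) (hrnk : r < n - k)
    (x : {I : Finset (Fin n) // I.card = r} → ℝ)
    (hx : ∀ S ∈ (univ : Finset (Fin n)).powersetCard k,
       (∑ I : {I : Finset (Fin n) // I.card = r}, (if I.1 ⊆ S then x I else 0)) = 0) :
    x = 0 := by
  classical
  set K := (univ : Finset (Fin n)).powersetCard k with hK
  obtain ⟨α, hBα⟩ : ∃ α : Fin (r+1) → ℝ, ∀ t : Fin (r+1),
      (∑ j : Fin (r+1), Bmat n r k t j * α j) = if (t:ℕ) = r then 1 else 0 := by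
    refine ⟨(Bmat n r k)⁻¹ *ᵥ (fun t : Fin (r+1) => if (t:ℕ) = r then (1:ℝ) else 0), fun t => ?_⟩
    have h1 : (Bmat n r k) *ᵥ ((Bmat n r k)⁻¹ *ᵥ (fun t : Fin (r+1) => if (t:ℕ) = r then (1:ℝ) else 0))
        = (fun t : Fin (r+1) => if (t:ℕ) = r then (1:ℝ) else 0) := by
      rw [Matrix.mulVec_mulVec,
        Matrix.mul_nonsing_inv _ (isUnit_iff_ne_zero.mpr (Bmat_det_ne_zero n r k hr hrn hrk hrnk)),
        Matrix.one_mulVec]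
    have h2 := congrFun h1 t
    rw [Matrix.mulVec, dotProduct] at h2
    exact h2
  funext I₀
  have hcap : ∀ S : Finset (Fin n), (S ∩ I₀.1).card ≤ r := fun S => by
    have := card_le_card (inter_subset_right : S ∩ I₀.1 ⊆ I₀.1)
    rw [I₀.2] at this; exact this
  set β : Finset (Fin n) → ℝ :=
    fun S => α ⟨min (S ∩ I₀.1).card r, Nat.lt_succ_of_le (min_le_right _ _)⟩ with hβ
  have key : (∑ S ∈ K, ∑ I : {I : Finset (Fin n) // I.card = r},
      (if I.1 ⊆ S then β S * x I else 0)) = 0 := by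
    refine Finset.sum_eq_zero fun S hS => ?_
    have : (∑ I : {I : Finset (Fin n) // I.card = r}, (if I.1 ⊆ S then β S * x I else 0))
        = β S * ∑ I : {I : Finset (Fin n) // I.card = r}, (if I.1 ⊆ S then x I else 0) := by
      rw [Finset.mul_sum]
      exact Finset.sum_congr rfl fun I _ => by rw [mul_ite, mul_zero]
    rw [this, hx S hS, mul_zero]
  rw [Finset.sum_comm] at key
  have inner : ∀ I : {I : Finset (Fin n) // I.card = r},
      (∑ S ∈ K, (if I.1 ⊆ S then β S * x I else 0))
        = (if I = I₀ then (1:ℝ) else 0) * x I := by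
    intro I
    have h1 : (∑ S ∈ K, (if I.1 ⊆ S then β S * x I else 0))
        = (∑ S ∈ K.filter (fun S => I.1 ⊆ S), β S) * x I := by
      rw [Finset.sum_mul, Finset.sum_filter]
    rw [h1]
    congr 1
    -- group by the intersection size with I₀
    rw [← Finset.sum_fiberwise_of_maps_to
      (g := fun S => (S ∩ I₀.1).card) (t := Finset.range (r+1))
      (fun S _ => Finset.mem_range.mpr (Nat.lt_succ_of_le (hcap S)))]
    set t := (I₀.1 ∩ I.1).card with htdef
    have htr : t ≤ r := by
      have := card_le_card (inter_subset_left : I₀.1 ∩ I.1 ⊆ I₀.1)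
      rw [I₀.2] at this; omega
    rw [← Fin.sum_univ_eq_sum_range
      (fun j => ∑ S ∈ (K.filter (fun S => I.1 ⊆ S)).filter
        (fun S => (S ∩ I₀.1).card = j), β S)]
    have step : ∀ j : Fin (r+1),
        (∑ S ∈ (K.filter (fun S => I.1 ⊆ S)).filter
            (fun S => (S ∩ I₀.1).card = (j:ℕ)), β S)
          = Bmat n r k ⟨t, Nat.lt_succ_of_le htr⟩ j * α j := by
      intro j
      have hjr : (j:ℕ) ≤ r := Nat.lt_succ_iff.mp j.2
      have hval : ∀ S ∈ (K.filter (fun S => I.1 ⊆ S)).filter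
          (fun S => (S ∩ I₀.1).card = (j:ℕ)), β S = α j := by
        intro S hS
        rw [Finset.mem_filter] at hS
        rw [hβ]
        exact congrArg α (Fin.ext (by simp only [hS.2]; exact min_eq_left hjr))
      rw [Finset.sum_congr rfl hval, Finset.sum_const, nsmul_eq_mul, Finset.filter_filter]
      congr 1
      exact count_eq_Bmat (n := n) (r := r) (k := k) I₀.1 I.1 I₀.2 I.2 (j:ℕ) hjr
    rw [Finset.sum_congr rfl (fun j _ => step j), hBα]
    simp only
    have : t = r ↔ I = I₀ := by
      constructor
      · intro h
        have hsub : I₀.1 ∩ I.1 ⊆ I₀.1 := inter_subset_left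
        have he : I₀.1 ∩ I.1 = I₀.1 := Finset.eq_of_subset_of_card_le hsub (by have := I₀.2; omega)
        have hsub2 : I₀.1 ⊆ I.1 := by
          rw [← he]; exact inter_subset_right
        have : I₀.1 = I.1 := Finset.eq_of_subset_of_card_le hsub2 (by rw [I₀.2, I.2])
        exact Subtype.ext this.symm
      · intro h
        rw [h, Finset.inter_self, I₀.2] at htdef
        exact htdef
    by_cases h : I = I₀
    · rw [if_pos h, if_pos (this.mpr h)]
    · rw [if_neg h, if_neg (fun hh => h (this.mp hh))]
  rw [Finset.sum_congr rfl (fun I _ => inner I)] at key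
  have : (∑ I : {I : Finset (Fin n) // I.card = r}, (if I = I₀ then (1:ℝ) else 0) * x I)
      = x I₀ := by
    rw [Finset.sum_congr rfl (fun I _ => by rw [ite_mul, one_mul, zero_mul]),
      Finset.sum_ite_eq' Finset.univ I₀ x]
    simp
  rw [this] at key
  exact key

lemma choose_identity (n r k t : ℕ) (htr : t ≤ r) (hr : 1 ≤ r) (hrn : 2*r ≤ n) (hrk : r < k)
    (hrnk : r < n - k) (hkt : 2*r - t ≤ k) :
    ((n - 2*r + t).choose t : ℝ) * (k.choose (2*r - t)) * ((2*r).choose r)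
        * ((n-r).choose (k-r))
      = ((n-r).choose r) * (k.choose r) * ((2*r).choose (2*r-t))
        * ((n - 2*r + t).choose (k - (2*r - t))) := by
  have hkn : k < n := by omega
  rw [Nat.cast_choose ℝ (show t ≤ n - 2*r + t by omega),
      Nat.cast_choose ℝ (show 2*r - t ≤ k from hkt),
      Nat.cast_choose ℝ (show r ≤ 2*r by omega),
      Nat.cast_choose ℝ (show k - r ≤ n - r by omega),
      Nat.cast_choose ℝ (show r ≤ n - r by omega),
      Nat.cast_choose ℝ (show r ≤ k by omega),
      Nat.cast_choose ℝ (show 2*r - t ≤ 2*r by omega),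
      Nat.cast_choose ℝ (show k - (2*r - t) ≤ n - 2*r + t by omega)]
  rw [show n - 2*r + t - t = n - 2*r by omega,
      show 2*r - r = r by omega,
      show n - r - (k - r) = n - k by omega,
      show n - r - r = n - 2*r by omega,
      show 2*r - (2*r - t) = t by omega,
      show n - 2*r + t - (k - (2*r - t)) = n - k by omega]
  have F : ∀ m : ℕ, ((Nat.factorial m : ℕ) : ℝ) ≠ 0 := fun m => Nat.cast_ne_zero.mpr (Nat.factorial_ne_zero m)
  field_simp

/-- For positive integers `n, r, k` with `2r ≤ n` and
`r < min(k, n−k)`, the matrix `E_r` is positive definite. -/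
theorem EmatR_posDef (n r k : ℕ) (hn : 1 ≤ n) (hr : 1 ≤ r) (hk : 1 ≤ k)
    (hrn : 2 * r ≤ n) (hrk : r < k) (hrnk : r < n - k) :
    (EmatR n r k).PosDef := by
  classical
  have hkn : k < n := by omega
  set K := (univ : Finset (Fin n)).powersetCard k with hK
  set γ : ℝ := ((2:ℝ) ^ (Nat.choose (2*r) 2))⁻¹ * ((n-r).choose r) * (k.choose r)
      / (((2*r).choose r) * ((n-r).choose (k-r))) with hγ
  have hγpos : 0 < γ := by
    apply div_pos
    · apply mul_pos (mul_pos (by positivity) _) _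
      · exact_mod_cast Nat.choose_pos (show r ≤ n - r by omega)
      · exact_mod_cast Nat.choose_pos (show r ≤ k by omega)
    · apply mul_pos
      · exact_mod_cast Nat.choose_pos (show r ≤ 2*r by omega)
      · exact_mod_cast Nat.choose_pos (show k - r ≤ n - r by omega)
  -- the entry identity
  have entry : ∀ I J : {I : Finset (Fin n) // I.card = r},
      EmatR n r k I J = γ * ((K.filter (fun S => I.1 ⊆ S ∧ J.1 ⊆ S)).card : ℝ) := by
    intro I J
    set t := (I.1 ∩ J.1).card with htdef
    have htr : t ≤ r := by
      have := card_le_card (inter_subset_left : I.1 ∩ J.1 ⊆ I.1)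
      have := I.2; omega
    have fe : K.filter (fun S => I.1 ⊆ S ∧ J.1 ⊆ S)
        = K.filter (fun S => J.1 ⊆ S ∧ (S ∩ I.1).card = r) := by
      apply Finset.filter_congr
      intro S _
      constructor
      · rintro ⟨h1, h2⟩
        refine ⟨h2, ?_⟩
        rw [Finset.inter_eq_right.mpr h1, I.2]
      · rintro ⟨h1, h2⟩
        refine ⟨?_, h1⟩
        have hsub : S ∩ I.1 ⊆ I.1 := inter_subset_right
        have : S ∩ I.1 = I.1 := Finset.eq_of_subset_of_card_le hsub (by rw [h2, I.2])
        rw [← this]; exact inter_subset_left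
    rw [fe]
    by_cases hc : 2*r - t ≤ k
    · rw [hK, count_main r k t r I.1 J.1 I.2 J.2 htdef.symm htr (le_refl r) (by omega)]
      rw [show k - r - (r - t) = k - (2*r - t) by omega, Nat.choose_self, one_mul,
        show n - (2*r - t) = n - 2*r + t by omega]
      rw [EmatR, hγ]
      have hid := choose_identity n r k t htr hr hrn hrk hrnk hc
      have c1 : ((2*r).choose (2*r - t) : ℝ) ≠ 0 := by
        exact_mod_cast (Nat.choose_pos (show 2*r - t ≤ 2*r by omega)).ne'
      have c2 : ((2*r).choose r : ℝ) ≠ 0 := by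
        exact_mod_cast (Nat.choose_pos (show r ≤ 2*r by omega)).ne'
      have c3 : ((n-r).choose (k-r) : ℝ) ≠ 0 := by
        exact_mod_cast (Nat.choose_pos (show k - r ≤ n - r by omega)).ne'
      rw [← htdef]
      have c4 : ((2:ℝ) ^ (Nat.choose (2*r) 2)) ≠ 0 := by positivity
      field_simp
      linear_combination hid
    · rw [hK, count_zero_big r k t r I.1 J.1 J.2 htdef.symm htr (by omega)]
      rw [EmatR, Nat.choose_eq_zero_of_lt (show k < 2*r - t by omega)]
      simp
  rw [Matrix.posDef_iff_dotProduct_mulVec]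
  constructor
  · -- Hermitian
    ext I J
    simp only [Matrix.conjTranspose_apply, star_trivial, EmatR]
    rw [inter_comm]
  · intro x hx
    -- rewrite the quadratic form
    have gdef : ∀ (I J : {I : Finset (Fin n) // I.card = r}),
        x I * (EmatR n r k I J * x J)
          = ∑ S ∈ K, γ * ((if I.1 ⊆ S then x I else 0) * (if J.1 ⊆ S then x J else 0)) := by
      intro I J
      have countR : ((K.filter (fun S => I.1 ⊆ S ∧ J.1 ⊆ S)).card : ℝ)
          = ∑ S ∈ K, (if I.1 ⊆ S then (1:ℝ) else 0) * (if J.1 ⊆ S then 1 else 0) := by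
        rw [Finset.card_filter]
        push_cast
        refine Finset.sum_congr rfl fun S _ => ?_
        by_cases h1 : I.1 ⊆ S <;> by_cases h2 : J.1 ⊆ S <;> simp [h1, h2]
      rw [entry I J, countR, Finset.mul_sum, Finset.sum_mul, Finset.mul_sum]
      refine Finset.sum_congr rfl fun S _ => ?_
      by_cases h1 : I.1 ⊆ S <;> by_cases h2 : J.1 ⊆ S <;> simp [h1, h2] <;> ring
    have qf : (star x) ⬝ᵥ ((EmatR n r k) *ᵥ x)
        = γ * ∑ S ∈ K, (∑ I : {I : Finset (Fin n) // I.card = r},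
            (if I.1 ⊆ S then x I else 0))^2 := by
      rw [dotProduct]
      calc (∑ I, star x I * ((EmatR n r k) *ᵥ x) I)
          = ∑ I, ∑ J, x I * (EmatR n r k I J * x J) := by
            refine Finset.sum_congr rfl fun I _ => ?_
            rw [star_trivial, Matrix.mulVec, dotProduct, Finset.mul_sum]
        _ = ∑ I, ∑ J, ∑ S ∈ K, γ * ((if I.1 ⊆ S then x I else 0)
              * (if J.1 ⊆ S then x J else 0)) := by
            simp only [gdef]
        _ = ∑ S ∈ K, ∑ I, ∑ J, γ * ((if I.1 ⊆ S then x I else 0)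
              * (if J.1 ⊆ S then x J else 0)) := by
            exact (Finset.sum_congr rfl fun I _ => Finset.sum_comm).trans Finset.sum_comm
        _ = γ * ∑ S ∈ K, (∑ I : {I : Finset (Fin n) // I.card = r},
              (if I.1 ⊆ S then x I else 0))^2 := by
            rw [Finset.mul_sum]
            refine Finset.sum_congr rfl fun S _ => ?_
            rw [sq, Finset.sum_mul_sum, Finset.mul_sum]
            refine Finset.sum_congr rfl fun I _ => ?_
            rw [Finset.mul_sum]
    rw [qf]
    -- positivity
    have hFne : ∃ S ∈ K, (∑ I : {I : Finset (Fin n) // I.card = r},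
        (if I.1 ⊆ S then x I else 0)) ≠ 0 := by
      by_contra hall
      push_neg at hall
      exact hx (indicator_inj hr hrn hrk hrnk x hall)
    obtain ⟨S₀, hS₀, hF⟩ := hFne
    apply mul_pos hγpos
    refine Finset.sum_pos' (fun S _ => sq_nonneg _) ⟨S₀, hS₀, ?_⟩
    positivity
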